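/- arXiv:2211.08589 — 4 statements merged into one kernel-verified Lean document; each statement's English description precedes it below -/
import Mathlib

section
/- For every integer s ≥ 3, there exists an edge-coloured graph (H, χ_H) on C(s,2) + s vertices with the following three properties: (1) the largest rainbow clique in (H, χ_H) has exactly C(s,2) + 1 vertices; (2) for every vertex v of H, the graph H − v contains a rainbow clique on C(s,2) + 1 vertices; (3) for every colour k ∈ ℕ, there is a rainbow clique on C(s,2) + 1 vertices none of whose edges is coloured k. -/
/-- `T` is a rainbow clique in the edge-coloured graph `(G, c)`: the vertices of `T` are
pairwise adjacent and the edges between them receive pairwise distinct colours. -/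
def IsRainbowClique {V : Type} (G : SimpleGraph V) (c : Sym2 V → ℕ) (T : Finset V) : Prop :=
  G.IsClique (T : Set V) ∧
  ∀ u ∈ T, ∀ v ∈ T, ∀ a ∈ T, ∀ b ∈ T, u ≠ v → a ≠ b → s(u, v) ≠ s(a, b) →
    c s(u, v) ≠ c s(a, b)

namespace Gadget
variable (s : ℕ)
abbrev PP := {p : Sym2 (Fin s) // ¬ p.IsDiag}
abbrev WW := PP s ⊕ Fin s
noncomputable def encP : PP s → ℕ := fun p => (Fintype.equivFin (PP s) p : ℕ)
noncomputable def encE : Sym2 (WW s) → ℕ := fun e => (Fintype.equivFin (Sym2 (WW s)) e : ℕ)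
lemma encP_inj : Function.Injective (encP s) := fun a b h =>
  (Fintype.equivFin (PP s)).injective (Fin.val_injective h)
lemma encE_inj : Function.Injective (encE s) := fun a b h =>
  (Fintype.equivFin (Sym2 (WW s))).injective (Fin.val_injective h)
def mEl : Sym2 (Fin s) → Fin s := Sym2.lift ⟨min, fun a b => min_comm a b⟩
lemma mEl_mk (i j : Fin s) : mEl s s(i, j) = min i j := rfl
lemma mEl_mem (z : Sym2 (Fin s)) : mEl s z ∈ z := by
  induction z using Sym2.ind with
  | _ i j =>
    rw [mEl_mk, Sym2.mem_iff]
    rcases min_choice i j with h | h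
    · exact Or.inl h
    · exact Or.inr h
def tag : WW s → WW s → Option (PP s)
  | .inl p, .inr i => if i = mEl s p.1 then some p else none
  | .inr i, .inl p => if i = mEl s p.1 then some p else none
  | .inr i, .inr j =>
      if h : i = j then none else some ⟨s(i, j), by simp [Sym2.mk_isDiag_iff, h]⟩
  | .inl _, .inl _ => none
lemma tag_symm (x y : WW s) : tag s x y = tag s y x := by
  rcases x with p | i <;> rcases y with q | j <;> simp only [tag]
  rcases eq_or_ne i j with h | h
  · simp [h]
  · rw [dif_neg h, dif_neg (Ne.symm h)]
    congr 1
    exact Subtype.ext (Sym2.eq_swap)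
noncomputable def f (x y : WW s) : ℕ :=
  match tag s x y with
  | some q => 2 * encP s q
  | none => 2 * encE s s(x, y) + 1
lemma f_symm (x y : WW s) : f s x y = f s y x := by
  unfold f
  rw [tag_symm, Sym2.eq_swap]
noncomputable def χ : Sym2 (WW s) → ℕ := Sym2.lift ⟨f s, f_symm s⟩
lemma χ_mk (x y : WW s) : χ s s(x, y) = f s x y := rfl
lemma tag_eq_some {x y : WW s} {q : PP s} (h : tag s x y = some q) :
    (x = .inl q ∧ y = .inr (mEl s q.1)) ∨ (y = .inl q ∧ x = .inr (mEl s q.1)) ∨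
      (∃ i j : Fin s, i ≠ j ∧ x = .inr i ∧ y = .inr j ∧ (q : Sym2 (Fin s)) = s(i, j)) := by
  rcases x with p | i <;> rcases y with p | j
  · simp [tag] at h
  · rw [tag] at h
    split_ifs at h with hc
    · obtain rfl := Option.some_injective _ h
      exact Or.inl ⟨rfl, by rw [hc]⟩
  · rw [tag] at h
    split_ifs at h with hc
    · obtain rfl := Option.some_injective _ h
      exact Or.inr (Or.inl ⟨rfl, by rw [hc]⟩)
  · rw [tag] at h
    split_ifs at h with hc
    · obtain rfl := Option.some_injective _ h
      exact Or.inr (Or.inr ⟨i, j, hc, rfl, rfl, rfl⟩)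
lemma χ_cases (u v : WW s) :
    χ s s(u, v) = 2 * encE s s(u, v) + 1 ∨
      ∃ q, tag s u v = some q ∧ χ s s(u, v) = 2 * encP s q := by
  rw [χ_mk]; unfold f
  rcases h : tag s u v with _ | q
  · exact Or.inl rfl
  · exact Or.inr ⟨q, rfl, rfl⟩

/-- No "bad triple": no pair vertex together with both its endpoints. -/
def Good (T : Finset (WW s)) : Prop :=
  ∀ q : PP s, ∀ i j : Fin s, Sum.inl q ∈ T → Sum.inr i ∈ T → Sum.inr j ∈ T → i ≠ j →
    (q : Sym2 (Fin s)) ≠ s(i, j)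

lemma rainbow_of_good {T : Finset (WW s)} (hT : Good s T) :
    IsRainbowClique ⊤ (χ s) T := by
  constructor
  · intro u _ v _ huv
    simpa using huv
  · intro u hu v hv a ha b hb huv hab hne
    rcases χ_cases s u v with h1 | ⟨q, htag1, h1⟩ <;>
      rcases χ_cases s a b with h2 | ⟨q', htag2, h2⟩ <;> rw [h1, h2]
    · intro h
      exact hne (encE_inj s (by omega))
    · omega
    · omega
    · intro h
      have hqq : q = q' := encP_inj s (by omega)
      subst hqq
      rcases tag_eq_some s htag1 with ⟨rfl, rfl⟩ | ⟨rfl, rfl⟩ | ⟨i, j, hij, rfl, rfl, hq⟩ <;>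
        rcases tag_eq_some s htag2 with ⟨rfl, rfl⟩ | ⟨rfl, rfl⟩ | ⟨i', j', hij', rfl, rfl, hq'⟩
      · exact hne rfl
      · exact hne Sym2.eq_swap
      · exact hT q i' j' hu (by simpa using ha) (by simpa using hb) hij' hq'
      · exact hne Sym2.eq_swap
      · exact hne rfl
      · exact hT q i' j' hv (by simpa using ha) (by simpa using hb) hij' hq'
      · exact hT q i j ha hu hv hij hq
      · exact hT q i j hb hu hv hij hq
      · rw [hq] at hq'
        rcases Sym2.eq_iff.1 hq' with ⟨rfl, rfl⟩ | ⟨rfl, rfl⟩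
        · exact hne rfl
        · exact hne Sym2.eq_swap

lemma good_of_rainbow {T : Finset (WW s)} (h : IsRainbowClique ⊤ (χ s) T) :
    Good s T := by
  intro q i j hq hi hj hij hcon
  obtain ⟨qv, hqd⟩ := q
  obtain rfl : qv = s(i, j) := hcon
  have hm : mEl s s(i, j) = i ∨ mEl s s(i, j) = j := Sym2.mem_iff.1 (mEl_mem s s(i, j))
  have hb : (Sum.inr (mEl s s(i, j)) : WW s) ∈ T := by
    rcases hm with hm | hm <;> rw [hm]
    · exact hi
    · exact hj
  have hne : s((Sum.inr i : WW s), Sum.inr j) ≠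
      s(Sum.inl (⟨s(i, j), hqd⟩ : PP s), Sum.inr (mEl s s(i, j))) := by
    intro hcc
    rcases Sym2.eq_iff.1 hcc with ⟨h1, -⟩ | ⟨-, h2⟩
    · exact absurd h1 (by simp)
    · exact absurd h2 (by simp)
  refine h.2 _ hi _ hj _ hq _ hb (by simp [hij]) (by simp) hne ?_
  have e1 : χ s s((Sum.inr i : WW s), Sum.inr j) = 2 * encP s ⟨s(i, j), hqd⟩ := by
    rw [χ_mk]; unfold f
    rw [tag, dif_neg hij]
  have e2 : χ s s((Sum.inl (⟨s(i, j), hqd⟩ : PP s) : WW s), Sum.inr (mEl s s(i, j))) =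
      2 * encP s ⟨s(i, j), hqd⟩ := by
    rw [χ_mk]; unfold f
    rw [tag, if_pos rfl]
  rw [e1, e2]

lemma card_le_of_good {T : Finset (WW s)} (hT : Good s T) :
    T.card ≤ s.choose 2 + 1 := by
  classical
  set SA := T.toLeft with hSA
  set SB := T.toRight with hSB
  have hcard : SA.card + SB.card = T.card := Finset.card_toLeft_add_card_toRight (u := T)
  have hPP : Fintype.card (PP s) = s.choose 2 := by
    rw [Sym2.card_subtype_not_diag, Fintype.card_fin]
  rcases SB.eq_empty_or_nonempty with hE | ⟨x0, hx0⟩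
  · have h1 := Finset.card_le_univ SA
    rw [hPP] at h1
    have h0 : SB.card = 0 := by rw [hE]; rfl
    omega
  · have hx0T : (Sum.inr x0 : WW s) ∈ T := Finset.mem_toRight.1 hx0
    set SA' : Finset (Sym2 (Fin s)) := SA.image Subtype.val with hSA'
    set G' : Finset (Sym2 (Fin s)) := (SB.erase x0).image (fun j => s(x0, j)) with hG'
    have hdisj : Disjoint SA' G' := by
      rw [Finset.disjoint_left]
      intro z hz1 hz2
      obtain ⟨q, hqSA, rfl⟩ := Finset.mem_image.1 hz1
      obtain ⟨j, hj, hzj⟩ := Finset.mem_image.1 hz2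
      have hjx : j ≠ x0 := (Finset.mem_erase.1 hj).1
      exact hT q x0 j (Finset.mem_toLeft.1 hqSA) hx0T
        (Finset.mem_toRight.1 (Finset.mem_erase.1 hj).2) (Ne.symm hjx) hzj.symm
    have hsub : SA' ∪ G' ⊆ Finset.univ.filter (fun z => ¬ z.IsDiag) := by
      intro z hz
      rcases Finset.mem_union.1 hz with hz | hz
      · obtain ⟨q, _, rfl⟩ := Finset.mem_image.1 hz
        simp [q.2]
      · obtain ⟨j, hj, rfl⟩ := Finset.mem_image.1 hz
        have hjx : j ≠ x0 := (Finset.mem_erase.1 hj).1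
        simp [Sym2.mk_isDiag_iff, Ne.symm hjx]
    have hA'card : SA'.card = SA.card :=
      Finset.card_image_of_injective _ Subtype.val_injective
    have hG'card : G'.card = SB.card - 1 := by
      rw [hG', Finset.card_image_of_injOn, Finset.card_erase_of_mem hx0]
      intro a ha b hb hab
      have ha' : a ≠ x0 := (Finset.mem_erase.1 ha).1
      rcases Sym2.eq_iff.1 hab with ⟨-, h⟩ | ⟨h1, h2⟩
      · exact h
      · exact h2.trans h1
    have hfc : (Finset.univ.filter (fun z : Sym2 (Fin s) => ¬ z.IsDiag)).card = s.choose 2 := by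
      rw [← hPP, Fintype.card_subtype]
    have hle := Finset.card_le_card hsub
    rw [Finset.card_union_of_disjoint hdisj, hfc, hA'card, hG'card] at hle
    have hSBpos : 1 ≤ SB.card := Finset.card_pos.2 ⟨x0, hx0⟩
    omega

/-- The big witness clique: all pair-vertices plus one base vertex. -/
def T0 (x : Fin s) : Finset (WW s) :=
  insert (Sum.inr x) ((Finset.univ : Finset (PP s)).image Sum.inl)

lemma mem_T0_inr {x i : Fin s} : (Sum.inr i : WW s) ∈ T0 s x ↔ i = x := by
  simp [T0]

lemma mem_T0_inl {x : Fin s} (q : PP s) : (Sum.inl q : WW s) ∈ T0 s x := by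
  simp [T0]

lemma good_T0 (x : Fin s) : Good s (T0 s x) := by
  intro q i j _ hi hj hij _
  rw [mem_T0_inr] at hi hj
  exact hij (hi.trans hj.symm)

lemma card_T0 (x : Fin s) : (T0 s x).card = s.choose 2 + 1 := by
  rw [T0, Finset.card_insert_of_notMem (by simp),
    Finset.card_image_of_injective _ Sum.inl_injective, Finset.card_univ,
    Sym2.card_subtype_not_diag, Fintype.card_fin]

/-- The replacement clique: all pair-vertices except `p`, plus the two endpoints of `p`. -/
def T2 (i j : Fin s) (p : PP s) : Finset (WW s) :=
  insert (Sum.inr i) (insert (Sum.inr j)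
    (((Finset.univ : Finset (PP s)).erase p).image Sum.inl))

lemma mem_T2_inr {i j a : Fin s} {p : PP s} :
    (Sum.inr a : WW s) ∈ T2 s i j p ↔ a = i ∨ a = j := by
  simp [T2]

lemma mem_T2_inl {i j : Fin s} {p q : PP s} :
    (Sum.inl q : WW s) ∈ T2 s i j p ↔ q ≠ p := by
  simp [T2]

lemma good_T2 {i j : Fin s} {p : PP s} (hp : (p : Sym2 (Fin s)) = s(i, j)) :
    Good s (T2 s i j p) := by
  intro q a b hq ha hb hab hcon
  rw [mem_T2_inl] at hq
  rw [mem_T2_inr] at ha hb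
  apply hq
  apply Subtype.ext
  rw [hcon, hp]
  rcases ha with rfl | rfl <;> rcases hb with rfl | rfl
  · exact absurd rfl hab
  · rfl
  · exact Sym2.eq_swap
  · exact absurd rfl hab

lemma card_T2 (hs : 3 ≤ s) {i j : Fin s} (hij : i ≠ j) (p : PP s) :
    (T2 s i j p).card = s.choose 2 + 1 := by
  have h2 : 1 ≤ s.choose 2 := Nat.choose_pos (by omega)
  rw [T2, Finset.card_insert_of_notMem (by simp [hij]),
    Finset.card_insert_of_notMem (by simp),
    Finset.card_image_of_injective _ Sum.inl_injective,
    Finset.card_erase_of_mem (Finset.mem_univ p), Finset.card_univ,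
    Sym2.card_subtype_not_diag, Fintype.card_fin]
  omega

lemma exists_pair_rep (p : PP s) : ∃ i j : Fin s, i ≠ j ∧ (p : Sym2 (Fin s)) = s(i, j) := by
  obtain ⟨z, hz⟩ := p
  revert hz
  induction z using Sym2.ind with
  | _ i j =>
    intro hz
    exact ⟨i, j, by simpa [Sym2.mk_isDiag_iff] using hz, rfl⟩

lemma exists_third (hs : 3 ≤ s) (i j : Fin s) : ∃ x : Fin s, x ≠ i ∧ x ≠ j := by
  by_contra h
  push_neg at h
  have hsub : (Finset.univ : Finset (Fin s)) ⊆ {i, j} := by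
    intro x _
    by_cases hx : x = i
    · simp [hx]
    · simp [h x hx]
  have h1 := Finset.card_le_card hsub
  have h2 : ({i, j} : Finset (Fin s)).card ≤ 2 :=
    (Finset.card_insert_le _ _).trans (by simp)
  rw [Finset.card_univ, Fintype.card_fin] at h1
  omega

lemma T0_colour {x : Fin s} {u v : WW s} (hu : u ∈ T0 s x) (hv : v ∈ T0 s x)
    (huv : u ≠ v) :
    χ s s(u, v) = 2 * encE s s(u, v) + 1 ∨
      ∃ q : PP s, x ∈ (q : Sym2 (Fin s)) ∧ χ s s(u, v) = 2 * encP s q := by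
  rcases χ_cases s u v with h | ⟨q, htag, h⟩
  · exact Or.inl h
  · refine Or.inr ⟨q, ?_, h⟩
    rcases tag_eq_some s htag with ⟨rfl, rfl⟩ | ⟨rfl, rfl⟩ | ⟨i, j, hij, rfl, rfl, hq⟩
    · have hvx := (mem_T0_inr s).1 hv
      rw [← hvx]
      exact mEl_mem s q.1
    · have hux := (mem_T0_inr s).1 hu
      rw [← hux]
      exact mEl_mem s q.1
    · have hi := (mem_T0_inr s).1 hu
      have hj := (mem_T0_inr s).1 hv
      exact absurd (hi.trans hj.symm) hij

lemma avoid (hs : 3 ≤ s) (k : ℕ) :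
    ∃ T : Finset (WW s), Good s T ∧ T.card = s.choose 2 + 1 ∧
      ∀ u ∈ T, ∀ v ∈ T, u ≠ v → χ s s(u, v) ≠ k := by
  have hx0 : (0 : ℕ) < s := by omega
  rcases Nat.even_or_odd k with hk | hk
  · obtain ⟨m, hm⟩ := hk
    by_cases hq : ∃ q : PP s, 2 * encP s q = k
    · obtain ⟨q, hqk⟩ := hq
      obtain ⟨i, j, hij, hqij⟩ := exists_pair_rep s q
      obtain ⟨x, hxi, hxj⟩ := exists_third s hs i j
      refine ⟨T0 s x, good_T0 s x, card_T0 s x, ?_⟩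
      intro u hu v hv huv hcc
      rcases T0_colour s hu hv huv with h | ⟨q', hq', h⟩
      · omega
      · rw [h] at hcc
        have hqq : q' = q := encP_inj s (by omega)
        subst hqq
        rw [hqij, Sym2.mem_iff] at hq'
        rcases hq' with h' | h'
        · exact hxi h'
        · exact hxj h'
    · refine ⟨T0 s ⟨0, hx0⟩, good_T0 _ _, card_T0 _ _, ?_⟩
      intro u hu v hv huv hcc
      rcases T0_colour s hu hv huv with h | ⟨q', -, h⟩
      · omega
      · exact hq ⟨q', by omega⟩
  · obtain ⟨m, hm⟩ := hk
    by_cases he : ∃ e : Sym2 (WW s), 2 * encE s e + 1 = k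
    · obtain ⟨e, hek⟩ := he
      induction e using Sym2.ind with
      | _ a b =>
        have key : ∀ T : Finset (WW s), Good s T → T.card = s.choose 2 + 1 →
            (a ∉ T ∨ b ∉ T) →
            ∃ T : Finset (WW s), Good s T ∧ T.card = s.choose 2 + 1 ∧
              ∀ u ∈ T, ∀ v ∈ T, u ≠ v → χ s s(u, v) ≠ k := by
          intro T hg hc hab
          refine ⟨T, hg, hc, ?_⟩
          intro u hu v hv huv hcc
          rcases χ_cases s u v with h | ⟨q', -, h⟩
          · rw [h] at hcc
            have hEE : s(u, v) = s(a, b) := encE_inj s (by omega)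
            have ha' : a ∈ s(u, v) := by rw [hEE]; exact Sym2.mem_mk_left a b
            have hb' : b ∈ s(u, v) := by rw [hEE]; exact Sym2.mem_mk_right a b
            rw [Sym2.mem_iff] at ha' hb'
            rcases hab with hab | hab
            · rcases ha' with rfl | rfl
              · exact hab hu
              · exact hab hv
            · rcases hb' with rfl | rfl
              · exact hab hu
              · exact hab hv
          · omega
        rcases a with p | i
        · obtain ⟨i, j, hij, hpij⟩ := exists_pair_rep s p
          refine key (T2 s i j p) (good_T2 s hpij) (card_T2 s hs hij p) (Or.inl ?_)
          rw [mem_T2_inl]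
          simp
        · rcases b with p | j
          · obtain ⟨i', j', hij', hpij'⟩ := exists_pair_rep s p
            refine key (T2 s i' j' p) (good_T2 s hpij') (card_T2 s hs hij' p) (Or.inr ?_)
            rw [mem_T2_inl]
            simp
          · obtain ⟨x, hxi, hxj⟩ := exists_third s hs i j
            refine key (T0 s x) (good_T0 s x) (card_T0 s x) (Or.inl ?_)
            rw [mem_T0_inr]
            exact fun h => hxi h.symm
    · refine ⟨T0 s ⟨0, hx0⟩, good_T0 _ _, card_T0 _ _, ?_⟩
      intro u hu v hv huv hcc
      rcases χ_cases s u v with h | ⟨q', -, h⟩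
      · exact he ⟨s(u, v), by omega⟩
      · omega

end Gadget

lemma rainbow_map {V V' : Type} (e : V ≃ V') (χ' : Sym2 V' → ℕ) (T : Finset V)
    (h : IsRainbowClique ⊤ (fun z => χ' (z.map e)) T) :
    IsRainbowClique ⊤ χ' (T.map e.toEmbedding) := by
  constructor
  · intro u _ v _ huv
    simpa using huv
  · intro u hu v hv a ha b hb huv hab hne
    obtain ⟨u0, hu0, rfl⟩ := Finset.mem_map.1 hu
    obtain ⟨v0, hv0, rfl⟩ := Finset.mem_map.1 hv
    obtain ⟨a0, ha0, rfl⟩ := Finset.mem_map.1 ha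
    obtain ⟨b0, hb0, rfl⟩ := Finset.mem_map.1 hb
    simp only [Equiv.coe_toEmbedding] at huv hab hne ⊢
    rw [← Sym2.map_pair_eq, ← Sym2.map_pair_eq]
    exact h.2 u0 hu0 v0 hv0 a0 ha0 b0 hb0
      (fun h' => huv (by rw [h'])) (fun h' => hab (by rw [h']))
      (fun h' => hne (by rw [← Sym2.map_pair_eq, ← Sym2.map_pair_eq, h']))

/-- **Lemma.** For every `s ≥ 3`, there is an edge-coloured graph `(H, χ_H)` on
`C(s,2) + s` vertices such that: (1) the largest rainbow clique in `H` has exactly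
`C(s,2) + 1` vertices; (2) for every vertex `v`, there is a rainbow clique on `C(s,2) + 1`
vertices avoiding `v`; (3) for every colour `k`, there is a rainbow clique on `C(s,2) + 1`
vertices none of whose edges has colour `k`. -/
theorem exists_gadget (s : ℕ) (hs : 3 ≤ s) :
    ∃ (H : SimpleGraph (Fin (s.choose 2 + s))) (χH : Sym2 (Fin (s.choose 2 + s)) → ℕ),
      ((∃ T, IsRainbowClique H χH T ∧ T.card = s.choose 2 + 1) ∧
        (∀ T, IsRainbowClique H χH T → T.card ≤ s.choose 2 + 1)) ∧
      (∀ v : Fin (s.choose 2 + s),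
        ∃ T, IsRainbowClique H χH T ∧ T.card = s.choose 2 + 1 ∧ v ∉ T) ∧
      (∀ k : ℕ, ∃ T, IsRainbowClique H χH T ∧ T.card = s.choose 2 + 1 ∧
        ∀ u ∈ T, ∀ v ∈ T, u ≠ v → χH s(u, v) ≠ k) := by
  classical
  have hcardW : Fintype.card (Gadget.WW s) = s.choose 2 + s := by
    rw [Fintype.card_sum, Fintype.card_fin]
    congr 1
    rw [Sym2.card_subtype_not_diag, Fintype.card_fin]
  let e : Gadget.WW s ≃ Fin (s.choose 2 + s) := Fintype.equivFinOfCardEq hcardW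
  let χ' : Sym2 (Fin (s.choose 2 + s)) → ℕ := fun z => Gadget.χ s (z.map e.symm)
  have hcomp : ∀ z : Sym2 (Gadget.WW s), (z.map e).map e.symm = z := by
    intro z
    induction z using Sym2.ind with
    | _ x y => rw [Sym2.map_pair_eq, Sym2.map_pair_eq, e.symm_apply_apply, e.symm_apply_apply]
  have hfun : (fun z => χ' (z.map e)) = Gadget.χ s := by
    funext z
    show Gadget.χ s ((z.map e).map e.symm) = Gadget.χ s z
    rw [hcomp]
  -- push a WW-level rainbow clique to Fin-level
  have push : ∀ T : Finset (Gadget.WW s), Gadget.Good s T →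
      IsRainbowClique ⊤ χ' (T.map e.toEmbedding) := by
    intro T hg
    exact rainbow_map e χ' T (hfun ▸ Gadget.rainbow_of_good s hg)
  have hedge : ∀ u0 v0 : Gadget.WW s, χ' s(e u0, e v0) = Gadget.χ s s(u0, v0) := by
    intro u0 v0
    show Gadget.χ s (Sym2.map e.symm s(e u0, e v0)) = _
    rw [Sym2.map_pair_eq, e.symm_apply_apply, e.symm_apply_apply]
  have hx0 : (0 : ℕ) < s := by omega
  refine ⟨⊤, χ', ⟨?_, ?_⟩, ?_, ?_⟩
  · -- existence of a max rainbow clique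
    refine ⟨(Gadget.T0 s ⟨0, hx0⟩).map e.toEmbedding, push _ (Gadget.good_T0 s _), ?_⟩
    rw [Finset.card_map, Gadget.card_T0]
  · -- upper bound
    intro T' hT'
    have h2 : IsRainbowClique ⊤ (Gadget.χ s) (T'.map e.symm.toEmbedding) := by
      refine rainbow_map e.symm (Gadget.χ s) T' ?_
      exact hT'
    have := Gadget.card_le_of_good s (Gadget.good_of_rainbow s h2)
    rwa [Finset.card_map] at this
  · -- avoiding any vertex
    intro v
    rcases hw : e.symm v with p | x
    · obtain ⟨i, j, hij, hpij⟩ := Gadget.exists_pair_rep s p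
      refine ⟨(Gadget.T2 s i j p).map e.toEmbedding, push _ (Gadget.good_T2 s hpij), ?_, ?_⟩
      · rw [Finset.card_map, Gadget.card_T2 s hs hij]
      · rw [Finset.mem_map_equiv, hw, Gadget.mem_T2_inl]
        simp
    · obtain ⟨y, hyx, -⟩ := Gadget.exists_third s hs x x
      refine ⟨(Gadget.T0 s y).map e.toEmbedding, push _ (Gadget.good_T0 s y), ?_, ?_⟩
      · rw [Finset.card_map, Gadget.card_T0]
      · rw [Finset.mem_map_equiv, hw, Gadget.mem_T0_inr]
        exact fun h => hyx h.symm
  · -- avoiding any colour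
    intro k
    obtain ⟨T, hg, hc, hav⟩ := Gadget.avoid s hs k
    refine ⟨T.map e.toEmbedding, push _ hg, by rw [Finset.card_map, hc], ?_⟩
    intro u hu v hv huv
    obtain ⟨u0, hu0, rfl⟩ := Finset.mem_map.1 hu
    obtain ⟨v0, hv0, rfl⟩ := Finset.mem_map.1 hv
    simp only [Equiv.coe_toEmbedding] at huv ⊢
    rw [hedge]
    exact hav u0 hu0 v0 hv0 (fun h' => huv (by rw [h']))
end

section
/- Let s ≥ 3, let S be a set of size s, and let S^(2) be the set of two-element subsets of S. Let K be the complete graph on the (disjoint) vertex set S ∪ S^(2), and let χ be an edge-colouring of K such that: for every pair {x,y} ∈ S^(2), the two edges (x, {x,y}) and (y, {x,y}) receive the same colour c_{xy}; the colours c_{xy} are pairwise distinct over distinct pairs {x,y}; and all remaining edges of K receive pairwise distinct colours, each different from every c_{xy}. Then every rainbow clique in (K, χ) has at most C(s,2) + 1 vertices. -/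
/-- In the complete graph on `S ⊕ S^(2)`, an edge is *special* if it joins `x ∈ S` to a pair
`p ∈ S^(2)` with `x ∈ p`. -/
def SpecialEdge {S : Type} (e : Sym2 (S ⊕ {p : Sym2 S // ¬ p.IsDiag})) : Prop :=
  ∃ (x : S) (p : {p : Sym2 S // ¬ p.IsDiag}), x ∈ p.val ∧ e = s(Sum.inl x, Sum.inr p)

lemma nat_le_choose_two_succ (a : ℕ) : a ≤ a.choose 2 + 1 := by
  match a with
  | 0 => simp
  | 1 => simp
  | (k+2) =>
    have h : (k+2).choose 2 = (k+1) + (k+1).choose 2 := by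
      rw [Nat.choose_succ_succ, Nat.choose_one_right]
    omega

/-- **Lemma (gadget, upper bound).** Let `|S| = s ≥ 3` and let `K` be the complete graph on
`S ⊕ S^(2)`, coloured so that for each pair `{x, y} ∈ S^(2)` the edges `(x, {x,y})` and
`(y, {x,y})` share a colour `cpair {x,y}`, these colours being pairwise distinct, while all
remaining edges get pairwise distinct colours different from every `cpair` value. Then every
rainbow clique in `(K, χ)` has at most `C(s,2) + 1` vertices. -/
theorem gadget_max_rainbow_clique {S : Type} [Fintype S] [DecidableEq S]
    (hs : 3 ≤ Fintype.card S)
    (χ : Sym2 (S ⊕ {p : Sym2 S // ¬ p.IsDiag}) → ℕ)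
    (cpair : {p : Sym2 S // ¬ p.IsDiag} → ℕ)
    (hsame : ∀ (x : S) (p : {p : Sym2 S // ¬ p.IsDiag}), x ∈ p.val →
      χ s(Sum.inl x, Sum.inr p) = cpair p)
    (hcpair : Function.Injective cpair)
    (hrest : ∀ e₁ e₂ : Sym2 (S ⊕ {p : Sym2 S // ¬ p.IsDiag}),
      ¬ e₁.IsDiag → ¬ e₂.IsDiag → ¬ SpecialEdge e₁ → ¬ SpecialEdge e₂ → e₁ ≠ e₂ →
      χ e₁ ≠ χ e₂)
    (hrest' : ∀ e : Sym2 (S ⊕ {p : Sym2 S // ¬ p.IsDiag}),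
      ¬ e.IsDiag → ¬ SpecialEdge e → ∀ p, χ e ≠ cpair p) :
    ∀ T : Finset (S ⊕ {p : Sym2 S // ¬ p.IsDiag}),
      IsRainbowClique (⊤ : SimpleGraph (S ⊕ {p : Sym2 S // ¬ p.IsDiag})) χ T →
      T.card ≤ (Fintype.card S).choose 2 + 1 := by
  intro T hT
  obtain ⟨-, hrb⟩ := hT
  set A : Finset S := T.toLeft with hA
  set B : Finset {p : Sym2 S // ¬ p.IsDiag} := T.toRight with hB
  -- key: no pair with both endpoints in A lies in B
  have key : ∀ p : {q : Sym2 S // ¬ q.IsDiag}, p ∈ B →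
      ∀ x y : S, x ∈ p.val → y ∈ p.val → x ≠ y → ¬ (x ∈ A ∧ y ∈ A) := by
    rintro p hp x y hx hy hxy ⟨hxA, hyA⟩
    have hpT : Sum.inr p ∈ T := Finset.mem_toRight.mp hp
    have hxT : (Sum.inl x : S ⊕ _) ∈ T := Finset.mem_toLeft.mp hxA
    have hyT : (Sum.inl y : S ⊕ _) ∈ T := Finset.mem_toLeft.mp hyA
    have hne : s(Sum.inl x, (Sum.inr p : S ⊕ _)) ≠ s(Sum.inl y, Sum.inr p) := by
      simp [Sym2.mk_eq_mk_iff, Prod.ext_iff, hxy]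
    exact hrb _ hxT _ hpT _ hyT _ hpT (by simp) (by simp) hne
      (by rw [hsame x p hx, hsame y p hy])
  -- the set of pairs from A, as a Finset of the pair subtype
  classical
  let φ : {q : Sym2 {x // x ∈ A} // ¬ q.IsDiag} → {q : Sym2 S // ¬ q.IsDiag} :=
    fun q => ⟨q.val.map Subtype.val, by
      rw [Sym2.isDiag_map Subtype.val_injective]; exact q.prop⟩
  have hφinj : Function.Injective φ := by
    intro q1 q2 h
    have := congrArg Subtype.val h
    exact Subtype.ext (Sym2.map.injective Subtype.val_injective this)
  let PA : Finset {q : Sym2 S // ¬ q.IsDiag} := Finset.univ.image φ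
  have hPAcard : PA.card = A.card.choose 2 := by
    rw [Finset.card_image_of_injective _ hφinj, Finset.card_univ,
      Sym2.card_subtype_not_diag, Fintype.card_coe]
  have hdisj : Disjoint B PA := by
    rw [Finset.disjoint_right]
    intro q hq hqB
    obtain ⟨q', -, rfl⟩ := Finset.mem_image.mp hq
    obtain ⟨⟨⟨u, hu⟩, ⟨v, hv⟩⟩, hq'⟩ := Quot.exists_rep q'.val
    have hdval : (φ q').val = s(u, v) := by
      show q'.val.map Subtype.val = _
      rw [← hq']; rfl
    have huv : u ≠ v := by
      intro h
      apply q'.prop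
      rw [← hq']
      subst h
      exact Sym2.mk_isDiag_iff.mpr (Subtype.ext rfl)
    exact key _ hqB u v (by rw [hdval]; simp) (by rw [hdval]; simp) huv ⟨hu, hv⟩
  have hcount : B.card + A.card.choose 2 ≤ (Fintype.card S).choose 2 := by
    rw [← hPAcard, ← Finset.card_union_of_disjoint hdisj, ← Sym2.card_subtype_not_diag]
    exact (Finset.card_le_univ _).trans_eq (Finset.card_univ)
  have hsplit : A.card + B.card = T.card := Finset.card_toLeft_add_card_toRight (u := T)
  have := nat_le_choose_two_succ A.card
  omega
end

section
/- Let s ≥ 3, let S be a set of size s, and let S^(2) be the set of two-element subsets of S. Let K be the complete graph on the (disjoint) vertex set S ∪ S^(2), and let χ be an edge-colouring of K such that: for every pair {x,y} ∈ S^(2), the two edges (x, {x,y}) and (y, {x,y}) receive the same colour c_{xy}; the colours c_{xy} are pairwise distinct over distinct pairs {x,y}; and all remaining edges of K receive pairwise distinct colours, each different from every c_{xy}. Then for any two distinct elements x, y ∈ S, the set T(x,y) := {x, y} ∪ (S^(2) ∖ {{x,y}}) is a rainbow clique in (K, χ) of size C(s,2) + 1. -/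
lemma special_inl_inr {S : Type} (x : S) (p : {p : Sym2 S // ¬ p.IsDiag}) :
    SpecialEdge s(Sum.inl x, Sum.inr p) ↔ x ∈ p.val := by
  simp [SpecialEdge, Sym2.eq_iff, eq_comm]

lemma not_special_inl_inl {S : Type} (x y : S) :
    ¬ SpecialEdge (s(Sum.inl x, Sum.inl y) : Sym2 (S ⊕ {p : Sym2 S // ¬ p.IsDiag})) := by
  simp [SpecialEdge, Sym2.eq_iff]

lemma not_special_inr_inr {S : Type} (p q : {p : Sym2 S // ¬ p.IsDiag}) :
    ¬ SpecialEdge (s(Sum.inr p, Sum.inr q) : Sym2 (S ⊕ {p : Sym2 S // ¬ p.IsDiag})) := by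
  simp [SpecialEdge, Sym2.eq_iff]

/-- **Lemma (gadget, maximum rainbow cliques).** With the complete graph on `S ⊕ S^(2)`
coloured as in the gadget construction, for any two distinct `x, y ∈ S` the set
`T(x, y) = {x, y} ∪ (S^(2) \\ {{x, y}})` is a rainbow clique of size `C(s,2) + 1`. -/
theorem gadget_T_rainbow_clique {S : Type} [Fintype S] [DecidableEq S]
    (hs : 3 ≤ Fintype.card S)
    (χ : Sym2 (S ⊕ {p : Sym2 S // ¬ p.IsDiag}) → ℕ)
    (cpair : {p : Sym2 S // ¬ p.IsDiag} → ℕ)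
    (hsame : ∀ (x : S) (p : {p : Sym2 S // ¬ p.IsDiag}), x ∈ p.val →
      χ s(Sum.inl x, Sum.inr p) = cpair p)
    (hcpair : Function.Injective cpair)
    (hrest : ∀ e₁ e₂ : Sym2 (S ⊕ {p : Sym2 S // ¬ p.IsDiag}),
      ¬ e₁.IsDiag → ¬ e₂.IsDiag → ¬ SpecialEdge e₁ → ¬ SpecialEdge e₂ → e₁ ≠ e₂ →
      χ e₁ ≠ χ e₂)
    (hrest' : ∀ e : Sym2 (S ⊕ {p : Sym2 S // ¬ p.IsDiag}),
      ¬ e.IsDiag → ¬ SpecialEdge e → ∀ p, χ e ≠ cpair p) :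
    ∀ x y : S, x ≠ y →
      IsRainbowClique (⊤ : SimpleGraph (S ⊕ {p : Sym2 S // ¬ p.IsDiag})) χ
        (({Sum.inl x, Sum.inl y} : Finset (S ⊕ {p : Sym2 S // ¬ p.IsDiag})) ∪
          (Finset.univ.filter
            (fun p : {p : Sym2 S // ¬ p.IsDiag} => p.val ≠ s(x, y))).image Sum.inr) ∧
      (({Sum.inl x, Sum.inl y} : Finset (S ⊕ {p : Sym2 S // ¬ p.IsDiag})) ∪
          (Finset.univ.filter
            (fun p : {p : Sym2 S // ¬ p.IsDiag} => p.val ≠ s(x, y))).image Sum.inr).card =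
        (Fintype.card S).choose 2 + 1 := by
  intro x y hxy
  set T := (({Sum.inl x, Sum.inl y} : Finset (S ⊕ {p : Sym2 S // ¬ p.IsDiag})) ∪
      (Finset.univ.filter
        (fun p : {p : Sym2 S // ¬ p.IsDiag} => p.val ≠ s(x, y))).image Sum.inr) with hT
  have hmem : ∀ u, u ∈ T ↔ (u = Sum.inl x ∨ u = Sum.inl y ∨
      ∃ p : {p : Sym2 S // ¬ p.IsDiag}, p.val ≠ s(x, y) ∧ u = Sum.inr p) := by
    intro u
    simp only [hT, Finset.mem_union, Finset.mem_insert, Finset.mem_singleton,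
      Finset.mem_image, Finset.mem_filter, Finset.mem_univ, true_and]
    constructor
    · rintro ((h | h) | ⟨p, hp, rfl⟩)
      · exact Or.inl h
      · exact Or.inr (Or.inl h)
      · exact Or.inr (Or.inr ⟨p, hp, rfl⟩)
    · rintro (h | h | ⟨p, hp, rfl⟩)
      · exact Or.inl (Or.inl h)
      · exact Or.inl (Or.inr h)
      · exact Or.inr ⟨p, hp, rfl⟩
  -- classification of special edges inside T
  have hclass : ∀ u ∈ T, ∀ v ∈ T, SpecialEdge s(u, v) →
      ∃ (z : S) (p : {p : Sym2 S // ¬ p.IsDiag}),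
        (z = x ∨ z = y) ∧ p.val ≠ s(x, y) ∧ z ∈ p.val ∧
        s(u, v) = s(Sum.inl z, Sum.inr p) := by
    intro u hu v hv hsp
    obtain ⟨z, p, hz, he⟩ := hsp
    have hzT : Sum.inl z ∈ T := by
      have : (Sum.inl z : S ⊕ {p : Sym2 S // ¬ p.IsDiag}) ∈ s(u, v) := by
        rw [he]; exact Sym2.mem_mk_left _ _
      rcases Sym2.mem_iff.mp this with h | h
      · rwa [h]
      · rwa [h]
    have hpT : (Sum.inr p : S ⊕ {p : Sym2 S // ¬ p.IsDiag}) ∈ T := by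
      have : (Sum.inr p : S ⊕ {p : Sym2 S // ¬ p.IsDiag}) ∈ s(u, v) := by
        rw [he]; exact Sym2.mem_mk_right _ _
      rcases Sym2.mem_iff.mp this with h | h
      · rwa [h]
      · rwa [h]
    have hz' : z = x ∨ z = y := by
      rcases (hmem _).mp hzT with h | h | ⟨q, _, h⟩
      · exact Or.inl (Sum.inl.inj h)
      · exact Or.inr (Sum.inl.inj h)
      · exact absurd h (by simp)
    have hp' : p.val ≠ s(x, y) := by
      rcases (hmem _).mp hpT with h | h | ⟨q, hq, h⟩
      · exact absurd h (by simp)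
      · exact absurd h (by simp)
      · rwa [Sum.inr.inj h]
    exact ⟨z, p, hz', hp', hz, he⟩
  constructor
  · constructor
    · intro u _ v _ huv
      simp [huv]
    · intro u hu v hv a ha b hb huv hab hne
      have hd1 : ¬ (s(u, v)).IsDiag := by rw [Sym2.mk_isDiag_iff]; exact huv
      have hd2 : ¬ (s(a, b)).IsDiag := by rw [Sym2.mk_isDiag_iff]; exact hab
      by_cases h1 : SpecialEdge s(u, v) <;> by_cases h2 : SpecialEdge s(a, b)
      · -- both special
        obtain ⟨z₁, p₁, hz₁xy, hp₁, hz₁, he₁⟩ := hclass u hu v hv h1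
        obtain ⟨z₂, p₂, hz₂xy, hp₂, hz₂, he₂⟩ := hclass a ha b hb h2
        rw [he₁, he₂, hsame z₁ p₁ hz₁, hsame z₂ p₂ hz₂]
        intro hc
        have hpp : p₁ = p₂ := hcpair hc
        subst hpp
        have hzz : z₁ ≠ z₂ := by
          rintro rfl
          exact hne (he₁.trans he₂.symm)
        have hxp : x ∈ p₁.val ∧ y ∈ p₁.val := by
          rcases hz₁xy with h1 | h1 <;> rcases hz₂xy with h2 | h2
          · exact absurd (h1.trans h2.symm) hzz
          · exact ⟨h1 ▸ hz₁, h2 ▸ hz₂⟩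
          · exact ⟨h2 ▸ hz₂, h1 ▸ hz₁⟩
          · exact absurd (h1.trans h2.symm) hzz
        exact hp₁ ((Sym2.mem_and_mem_iff hxy).mp hxp)
      · obtain ⟨z₁, p₁, _, _, hz₁, he₁⟩ := hclass u hu v hv h1
        rw [he₁, hsame z₁ p₁ hz₁]
        exact fun hc => hrest' _ hd2 h2 p₁ hc.symm
      · obtain ⟨z₂, p₂, _, _, hz₂, he₂⟩ := hclass a ha b hb h2
        rw [he₂, hsame z₂ p₂ hz₂]
        exact hrest' _ hd1 h1 p₂
      · exact hrest _ _ hd1 hd2 h1 h2 hne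
  · -- cardinality
    have hdisj : Disjoint ({Sum.inl x, Sum.inl y} : Finset (S ⊕ {p : Sym2 S // ¬ p.IsDiag}))
        ((Finset.univ.filter
          (fun p : {p : Sym2 S // ¬ p.IsDiag} => p.val ≠ s(x, y))).image Sum.inr) := by
      simp [Finset.disjoint_left]
    have hnd : ¬ (s(x, y)).IsDiag := by rw [Sym2.mk_isDiag_iff]; exact hxy
    have hfilter : (Finset.univ.filter
        (fun p : {p : Sym2 S // ¬ p.IsDiag} => p.val ≠ s(x, y))) =
        Finset.univ.erase ⟨s(x, y), hnd⟩ := by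
      ext p
      simp [Subtype.ext_iff]
    rw [hT, Finset.card_union_of_disjoint hdisj, Finset.card_image_of_injective _
      Sum.inr_injective, hfilter, Finset.card_erase_of_mem (Finset.mem_univ _),
      Finset.card_univ, Sym2.card_subtype_not_diag]
    have h2 : 3 ≤ (Fintype.card S).choose 2 := by
      have := Nat.choose_le_choose 2 hs
      norm_num at this
      exact this
    have hcard : ({Sum.inl x, Sum.inl y} : Finset (S ⊕ {p : Sym2 S // ¬ p.IsDiag})).card = 2 := by
      rw [Finset.card_insert_of_notMem (by simp [hxy]), Finset.card_singleton]
    omega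
end

section
/- Let s ≥ 3 and t ≥ 0 be integers. Let (H, χ_H) be an edge-coloured graph on C(s,2) + s vertices such that: for every vertex v of H there is a rainbow clique on C(s,2) + 1 vertices avoiding v, and for every colour k ∈ ℕ there is a rainbow clique on C(s,2) + 1 vertices none of whose edges is coloured k. Let T₁, T₂, U be sets, pairwise disjoint and disjoint from V(H), with |T₁| = |T₂| = t and |U| ≥ 2. Let G be the graph on vertex set V(H) ∪ T₁ ∪ T₂ ∪ U in which two distinct vertices are adjacent unless both lie in U, or one lies in T₁ and the other in T₂. Let χ be an edge-colouring of G that agrees with χ_H on the edges of H and assigns to all remaining edges of G pairwise distinct colours, none of which is used by χ_H. Then for any two distinct vertices x, y ∈ U and any colour k ∈ ℕ, the edge-coloured graph obtained from (G, χ) by adding the edge xy with colour k contains a rainbow clique on C(s,2) + t + 3 vertices. -/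
section CliqueConstruction

variable (VH T₁ T₂ U : Type)

/-- Membership in `T₁`. -/
def InT₁ : VH ⊕ T₁ ⊕ T₂ ⊕ U → Prop := fun a => ∃ u : T₁, a = Sum.inr (Sum.inl u)

/-- Membership in `T₂`. -/
def InT₂ : VH ⊕ T₁ ⊕ T₂ ⊕ U → Prop := fun a => ∃ u : T₂, a = Sum.inr (Sum.inr (Sum.inl u))

/-- Membership in `U`. -/
def InU : VH ⊕ T₁ ⊕ T₂ ⊕ U → Prop := fun a => ∃ u : U, a = Sum.inr (Sum.inr (Sum.inr u))

/-- The graph on `V(H) ∪ T₁ ∪ T₂ ∪ U` in which two distinct vertices are adjacent unless both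
lie in `U`, or one lies in `T₁` and the other in `T₂`. -/
def CliqueConstr : SimpleGraph (VH ⊕ T₁ ⊕ T₂ ⊕ U) where
  Adj a b := a ≠ b ∧ ¬(InU VH T₁ T₂ U a ∧ InU VH T₁ T₂ U b) ∧
    ¬(InT₁ VH T₁ T₂ U a ∧ InT₂ VH T₁ T₂ U b) ∧ ¬(InT₁ VH T₁ T₂ U b ∧ InT₂ VH T₁ T₂ U a)
  symm := ⟨by
    rintro a b ⟨h₁, h₂, h₃, h₄⟩
    exact ⟨h₁.symm, fun h => h₂ ⟨h.2, h.1⟩, h₄, h₃⟩⟩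
  loopless := ⟨fun a h => h.1 rfl⟩

end CliqueConstruction

theorem aux_clique
    {VH T₁ T₂ U : Type}
    [DecidableEq VH] [DecidableEq T₁] [DecidableEq T₂] [DecidableEq U]
    (HH : SimpleGraph VH) (χH : Sym2 VH → ℕ)
    (χ : Sym2 (VH ⊕ T₁ ⊕ T₂ ⊕ U) → ℕ)
    (hagree : ∀ u v : VH, HH.Adj u v → χ s(Sum.inl u, Sum.inl v) = χH s(u, v))
    (hnew : ∀ e₁ ∈ (CliqueConstr VH T₁ T₂ U).edgeSet, ∀ e₂ ∈ (CliqueConstr VH T₁ T₂ U).edgeSet,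
      (¬ ∃ u v : VH, HH.Adj u v ∧ e₁ = s(Sum.inl u, Sum.inl v)) →
      (¬ ∃ u v : VH, HH.Adj u v ∧ e₂ = s(Sum.inl u, Sum.inl v)) →
      e₁ ≠ e₂ → χ e₁ ≠ χ e₂)
    (hnew' : ∀ e ∈ (CliqueConstr VH T₁ T₂ U).edgeSet,
      (¬ ∃ u v : VH, HH.Adj u v ∧ e = s(Sum.inl u, Sum.inl v)) →
      ∀ u v : VH, HH.Adj u v → χ e ≠ χH s(u, v))
    (x y : U) (hxy : x ≠ y) (k : ℕ)
    (A : Finset VH) (hA : IsRainbowClique HH χH A)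
    (W : Finset (VH ⊕ T₁ ⊕ T₂ ⊕ U))
    (hWT : (∀ w ∈ W, InT₁ VH T₁ T₂ U w) ∨ (∀ w ∈ W, InT₂ VH T₁ T₂ U w))
    (hkA : ∀ u ∈ A, ∀ v ∈ A, u ≠ v → χH s(u, v) ≠ k)
    (hknew : ∀ e ∈ (CliqueConstr VH T₁ T₂ U).edgeSet,
        (¬ ∃ u v : VH, HH.Adj u v ∧ e = s(Sum.inl u, Sum.inl v)) →
        (∀ z ∈ e, z ∈ insert (Sum.inr (Sum.inr (Sum.inr x)) : VH ⊕ T₁ ⊕ T₂ ⊕ U)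
            (insert (Sum.inr (Sum.inr (Sum.inr y)))
              (W ∪ A.map ⟨Sum.inl, Sum.inl_injective⟩))) → χ e ≠ k) :
    IsRainbowClique
      (CliqueConstr VH T₁ T₂ U ⊔ SimpleGraph.fromEdgeSet
        {s((Sum.inr (Sum.inr (Sum.inr x)) : VH ⊕ T₁ ⊕ T₂ ⊕ U),
           Sum.inr (Sum.inr (Sum.inr y)))})
      (Function.update χ
        s((Sum.inr (Sum.inr (Sum.inr x)) : VH ⊕ T₁ ⊕ T₂ ⊕ U),
          Sum.inr (Sum.inr (Sum.inr y))) k)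
      (insert (Sum.inr (Sum.inr (Sum.inr x)) : VH ⊕ T₁ ⊕ T₂ ⊕ U)
        (insert (Sum.inr (Sum.inr (Sum.inr y)))
          (W ∪ A.map ⟨Sum.inl, Sum.inl_injective⟩))) ∧
    (insert (Sum.inr (Sum.inr (Sum.inr x)) : VH ⊕ T₁ ⊕ T₂ ⊕ U)
        (insert (Sum.inr (Sum.inr (Sum.inr y)))
          (W ∪ A.map ⟨Sum.inl, Sum.inl_injective⟩))).card = A.card + W.card + 2 := by
  set ix : VH ⊕ T₁ ⊕ T₂ ⊕ U := Sum.inr (Sum.inr (Sum.inr x)) with hix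
  set iy : VH ⊕ T₁ ⊕ T₂ ⊕ U := Sum.inr (Sum.inr (Sum.inr y)) with hiy
  set S : Finset (VH ⊕ T₁ ⊕ T₂ ⊕ U) :=
    insert ix (insert iy (W ∪ A.map ⟨Sum.inl, Sum.inl_injective⟩)) with hS
  -- basic facts about W
  have hWnotinl : ∀ w ∈ W, ∀ v : VH, w ≠ Sum.inl v := by
    intro w hw v hv
    rcases hWT with h | h
    · obtain ⟨u, hu⟩ := h w hw; rw [hv] at hu; exact Sum.inl_ne_inr hu
    · obtain ⟨u, hu⟩ := h w hw; rw [hv] at hu; exact Sum.inl_ne_inr hu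
  have hWnotU : ∀ w ∈ W, ¬ InU VH T₁ T₂ U w := by
    intro w hw hU
    obtain ⟨u, hu⟩ := hU
    rcases hWT with h | h
    · obtain ⟨u', hu'⟩ := h w hw; rw [hu] at hu'; simp at hu'
    · obtain ⟨u', hu'⟩ := h w hw; rw [hu] at hu'; simp at hu'
  have hixiy : ix ≠ iy := by simp [hix, hiy, hxy]
  -- classification of members of S
  have hmem : ∀ a ∈ S, a = ix ∨ a = iy ∨ a ∈ W ∨ ∃ v ∈ A, a = Sum.inl v := by
    intro a ha
    simp only [hS, Finset.mem_insert, Finset.mem_union, Finset.mem_map,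
      Function.Embedding.coeFn_mk] at ha
    rcases ha with h | h | h | ⟨v, hv, rfl⟩
    · exact Or.inl h
    · exact Or.inr (Or.inl h)
    · exact Or.inr (Or.inr (Or.inl h))
    · exact Or.inr (Or.inr (Or.inr ⟨v, hv, rfl⟩))
  have hinlmem : ∀ v : VH, (Sum.inl v : VH ⊕ T₁ ⊕ T₂ ⊕ U) ∈ S → v ∈ A := by
    intro v hv
    rcases hmem _ hv with h | h | h | ⟨v', hv', h⟩
    · simp [hix] at h
    · simp [hiy] at h
    · exact absurd rfl (hWnotinl _ h v)
    · rw [Sum.inl.injEq] at h; exact h ▸ hv'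
  have hAmem : ∀ v ∈ A, (Sum.inl v : VH ⊕ T₁ ⊕ T₂ ⊕ U) ∈ S := by
    intro v hv
    simp only [hS, Finset.mem_insert, Finset.mem_union, Finset.mem_map,
      Function.Embedding.coeFn_mk]
    exact Or.inr (Or.inr (Or.inr ⟨v, hv, rfl⟩))
  have hUmem : ∀ a ∈ S, InU VH T₁ T₂ U a → a = ix ∨ a = iy := by
    intro a ha hU
    rcases hmem _ ha with h | h | h | ⟨v, hv, rfl⟩
    · exact Or.inl h
    · exact Or.inr h
    · exact absurd hU (hWnotU _ h)
    · obtain ⟨u, hu⟩ := hU; exact absurd hu (by simp)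
  -- every pair in S is adjacent, and we classify edges
  have hexy : ∀ a ∈ S, ∀ b ∈ S, a ≠ b → s(a, b) = s(ix, iy) →
      (a = ix ∧ b = iy) ∨ (a = iy ∧ b = ix) := by
    intro a _ b _ hab h
    rw [Sym2.eq_iff] at h; exact h
  have hadjG : ∀ a ∈ S, ∀ b ∈ S, a ≠ b → s(a, b) ≠ s(ix, iy) →
      (CliqueConstr VH T₁ T₂ U).Adj a b := by
    intro a ha b hb hab hne
    refine ⟨hab, ?_, ?_, ?_⟩
    · rintro ⟨hUa, hUb⟩
      rcases hUmem a ha hUa with rfl | rfl <;> rcases hUmem b hb hUb with rfl | rfl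
      · exact hab rfl
      · exact hne rfl
      · exact hne (Sym2.eq_swap)
      · exact hab rfl
    · rintro ⟨⟨u, rfl⟩, ⟨u', hb'⟩⟩
      subst hb'
      rcases hWT with h | h
      · -- all of W in T₁; b = inr inr inl u' must be in W then InT₁, contradiction
        rcases hmem _ hb with h' | h' | h' | ⟨v, _, h'⟩
        · simp [hix] at h'
        · simp [hiy] at h'
        · obtain ⟨w', hw'⟩ := h _ h'; simp at hw'
        · simp at h'
      · rcases hmem _ ha with h' | h' | h' | ⟨v, _, h'⟩
        · simp [hix] at h'
        · simp [hiy] at h'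
        · obtain ⟨w', hw'⟩ := h _ h'; simp at hw'
        · simp at h'
    · rintro ⟨⟨u, hb'⟩, ⟨u', rfl⟩⟩
      subst hb'
      rcases hWT with h | h
      · rcases hmem _ ha with h' | h' | h' | ⟨v, _, h'⟩
        · simp [hix] at h'
        · simp [hiy] at h'
        · obtain ⟨w', hw'⟩ := h _ h'; simp at hw'
        · simp at h'
      · rcases hmem _ hb with h' | h' | h' | ⟨v, _, h'⟩
        · simp [hix] at h'
        · simp [hiy] at h'
        · obtain ⟨w', hw'⟩ := h _ h'; simp at hw'
        · simp at h'
  have hclique : (CliqueConstr VH T₁ T₂ U ⊔ SimpleGraph.fromEdgeSet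
      {s(ix, iy)}).IsClique (S : Set (VH ⊕ T₁ ⊕ T₂ ⊕ U)) := by
    intro a ha b hb hab
    by_cases h : s(a, b) = s(ix, iy)
    · exact Or.inr ⟨h, hab⟩
    · exact Or.inl (hadjG a ha b hb hab h)
  -- edge classification
  have hedge : ∀ a ∈ S, ∀ b ∈ S, a ≠ b →
      (s(a, b) = s(ix, iy)) ∨
      (∃ u' ∈ A, ∃ v' ∈ A, u' ≠ v' ∧ HH.Adj u' v' ∧ a = Sum.inl u' ∧ b = Sum.inl v') ∨
      (s(a, b) ∈ (CliqueConstr VH T₁ T₂ U).edgeSet ∧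
        (¬ ∃ u v : VH, HH.Adj u v ∧ s(a, b) = s(Sum.inl u, Sum.inl v)) ∧
        s(a, b) ≠ s(ix, iy)) := by
    intro a ha b hb hab
    by_cases h : s(a, b) = s(ix, iy)
    · exact Or.inl h
    by_cases hH : (∃ u : VH, a = Sum.inl u) ∧ (∃ v : VH, b = Sum.inl v)
    · obtain ⟨⟨u, rfl⟩, ⟨v, rfl⟩⟩ := hH
      have hu : u ∈ A := hinlmem u ha
      have hv : v ∈ A := hinlmem v hb
      have huv : u ≠ v := fun h' => hab (h' ▸ rfl)
      exact Or.inr (Or.inl ⟨u, hu, v, hv, huv, hA.1 hu hv huv, rfl, rfl⟩)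
    · refine Or.inr (Or.inr ⟨(CliqueConstr VH T₁ T₂ U).mem_edgeSet.2 (hadjG a ha b hb hab h), ?_, h⟩)
      rintro ⟨u, v, _, huv⟩
      rw [Sym2.eq_iff] at huv
      rcases huv with ⟨rfl, rfl⟩ | ⟨rfl, rfl⟩
      · exact hH ⟨⟨u, rfl⟩, ⟨v, rfl⟩⟩
      · exact hH ⟨⟨v, rfl⟩, ⟨u, rfl⟩⟩
  -- colour computation
  set c : Sym2 (VH ⊕ T₁ ⊕ T₂ ⊕ U) → ℕ := Function.update χ s(ix, iy) k with hc
  have hcxy : c s(ix, iy) = k := Function.update_self _ _ _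
  have hcne : ∀ e, e ≠ s(ix, iy) → c e = χ e := fun e he => Function.update_of_ne he _ _
  have hinlne : ∀ u v : VH, s((Sum.inl u : VH ⊕ T₁ ⊕ T₂ ⊕ U), Sum.inl v) ≠ s(ix, iy) := by
    intro u v h; rw [Sym2.eq_iff] at h
    rcases h with ⟨h, _⟩ | ⟨h, _⟩ <;> simp [hix, hiy] at h
  have hcH : ∀ u v : VH, HH.Adj u v → c s(Sum.inl u, Sum.inl v) = χH s(u, v) := by
    intro u v huv
    rw [hcne _ (hinlne u v)]
    exact hagree u v huv
  refine ⟨⟨hclique, ?_⟩, ?_⟩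
  · -- rainbow
    intro u hu v hv a ha b hb huv hab hne
    rcases hedge u hu v hv huv with h1 | h1 | h1 <;>
      rcases hedge a ha b hb hab with h2 | h2 | h2
    · exact absurd (h1.trans h2.symm) hne
    · obtain ⟨a', ha', b', hb', hab', hadj', rfl, rfl⟩ := h2
      rw [h1, hcxy, hcH _ _ hadj']
      exact fun h => hkA a' ha' b' hb' hab' h.symm
    · rw [h1, hcxy, hcne _ h2.2.2]
      intro h
      refine hknew _ h2.1 h2.2.1 ?_ h.symm
      intro z hz
      rw [Sym2.mem_iff] at hz
      rcases hz with rfl | rfl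
      · exact ha
      · exact hb
    · obtain ⟨u', hu', v', hv', huv', hadj', rfl, rfl⟩ := h1
      rw [h2, hcxy, hcH _ _ hadj']
      exact hkA u' hu' v' hv' huv'
    · obtain ⟨u', hu', v', hv', huv', hadju, rfl, rfl⟩ := h1
      obtain ⟨a', ha', b', hb', hab', hadja, rfl, rfl⟩ := h2
      rw [hcH _ _ hadju, hcH _ _ hadja]
      refine hA.2 u' hu' v' hv' a' ha' b' hb' huv' hab' ?_
      intro h
      exact hne (by rw [show s((Sum.inl u' : VH ⊕ T₁ ⊕ T₂ ⊕ U), Sum.inl v')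
        = Sym2.map Sum.inl s(u', v') from rfl, h]; rfl)
    · obtain ⟨u', hu', v', hv', huv', hadju, rfl, rfl⟩ := h1
      rw [hcH _ _ hadju, hcne _ h2.2.2]
      exact fun h => hnew' _ h2.1 h2.2.1 u' v' hadju h.symm
    · rw [hcne _ h1.2.2, h2, hcxy]
      refine hknew _ h1.1 h1.2.1 ?_
      intro z hz
      rw [Sym2.mem_iff] at hz
      rcases hz with rfl | rfl
      · exact hu
      · exact hv
    · obtain ⟨a', ha', b', hb', hab', hadj', rfl, rfl⟩ := h2
      rw [hcne _ h1.2.2, hcH _ _ hadj']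
      exact hnew' _ h1.1 h1.2.1 a' b' hadj'
    · rw [hcne _ h1.2.2, hcne _ h2.2.2]
      exact hnew _ h1.1 _ h2.1 h1.2.1 h2.2.1 hne
  · -- cardinality
    have h1 : Disjoint W (A.map ⟨Sum.inl, Sum.inl_injective⟩) := by
      rw [Finset.disjoint_left]
      rintro w hw hw'
      simp only [Finset.mem_map, Function.Embedding.coeFn_mk] at hw'
      obtain ⟨v, _, rfl⟩ := hw'
      exact hWnotinl _ hw v rfl
    have hiyB : iy ∉ W ∪ A.map ⟨Sum.inl, Sum.inl_injective⟩ := by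
      rw [Finset.mem_union]
      rintro (h | h)
      · exact hWnotU _ h ⟨y, rfl⟩
      · simp only [Finset.mem_map, Function.Embedding.coeFn_mk] at h
        obtain ⟨v, _, hv⟩ := h; simp [hiy] at hv
    have hixB : ix ∉ insert iy (W ∪ A.map ⟨Sum.inl, Sum.inl_injective⟩) := by
      rw [Finset.mem_insert]
      rintro (h | h)
      · exact hixiy h
      · rw [Finset.mem_union] at h
        rcases h with h | h
        · exact hWnotU _ h ⟨x, rfl⟩
        · simp only [Finset.mem_map, Function.Embedding.coeFn_mk] at h
          obtain ⟨v, _, hv⟩ := h; simp [hix] at hv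
    rw [hS, Finset.card_insert_of_notMem hixB, Finset.card_insert_of_notMem hiyB,
      Finset.card_union_of_disjoint h1, Finset.card_map]
    ring

/-- **Lemma (adding an edge inside `U` creates a big rainbow clique).** Let `s ≥ 3`, `t ≥ 0`,
and let `(H, χH)` be an edge-coloured graph on `C(s,2) + s` vertices such that every vertex can
be avoided by a rainbow clique on `C(s,2) + 1` vertices and every colour can be avoided by a
rainbow clique on `C(s,2) + 1` vertices. Let `|T₁| = |T₂| = t` and `|U| ≥ 2`, form the graph
`G` on `V(H) ∪ T₁ ∪ T₂ ∪ U` where two distinct vertices are adjacent unless both lie in `U` or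
one lies in `T₁` and the other in `T₂`, and colour it by `χ` agreeing with `χH` on the edges of
`H` and giving all remaining edges pairwise distinct colours unused by `χH`. Then for any two
distinct `x, y ∈ U` and any colour `k`, adding the edge `xy` in colour `k` creates a rainbow
clique on `C(s,2) + t + 3` vertices. -/
theorem clique_constr_add_edge_creates_rainbow_clique
    {VH T₁ T₂ U : Type} [Fintype VH] [Fintype T₁] [Fintype T₂] [Fintype U]
    [DecidableEq VH] [DecidableEq T₁] [DecidableEq T₂] [DecidableEq U]
    (s t : ℕ) (hs : 3 ≤ s)
    (hVH : Fintype.card VH = s.choose 2 + s)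
    (hT₁ : Fintype.card T₁ = t) (hT₂ : Fintype.card T₂ = t)
    (hU : 2 ≤ Fintype.card U)
    (HH : SimpleGraph VH) (χH : Sym2 VH → ℕ)
    (havoidv : ∀ v : VH, ∃ T : Finset VH,
      IsRainbowClique HH χH T ∧ T.card = s.choose 2 + 1 ∧ v ∉ T)
    (havoidc : ∀ k : ℕ, ∃ T : Finset VH,
      IsRainbowClique HH χH T ∧ T.card = s.choose 2 + 1 ∧
      ∀ u ∈ T, ∀ v ∈ T, u ≠ v → χH s(u, v) ≠ k)
    (χ : Sym2 (VH ⊕ T₁ ⊕ T₂ ⊕ U) → ℕ)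
    -- `χ` agrees with `χH` on the edges of `H`:
    (hagree : ∀ u v : VH, HH.Adj u v → χ s(Sum.inl u, Sum.inl v) = χH s(u, v))
    -- the remaining edges of `G` receive pairwise distinct colours:
    (hnew : ∀ e₁ ∈ (CliqueConstr VH T₁ T₂ U).edgeSet, ∀ e₂ ∈ (CliqueConstr VH T₁ T₂ U).edgeSet,
      (¬ ∃ u v : VH, HH.Adj u v ∧ e₁ = s(Sum.inl u, Sum.inl v)) →
      (¬ ∃ u v : VH, HH.Adj u v ∧ e₂ = s(Sum.inl u, Sum.inl v)) →
      e₁ ≠ e₂ → χ e₁ ≠ χ e₂)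
    -- and none of the colours on the remaining edges is used by `χH`:
    (hnew' : ∀ e ∈ (CliqueConstr VH T₁ T₂ U).edgeSet,
      (¬ ∃ u v : VH, HH.Adj u v ∧ e = s(Sum.inl u, Sum.inl v)) →
      ∀ u v : VH, HH.Adj u v → χ e ≠ χH s(u, v)) :
    ∀ x y : U, x ≠ y → ∀ k : ℕ,
      ∃ T : Finset (VH ⊕ T₁ ⊕ T₂ ⊕ U),
        IsRainbowClique
          (CliqueConstr VH T₁ T₂ U ⊔ SimpleGraph.fromEdgeSet
            {s((Sum.inr (Sum.inr (Sum.inr x)) : VH ⊕ T₁ ⊕ T₂ ⊕ U),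
               Sum.inr (Sum.inr (Sum.inr y)))})
          (Function.update χ
            s((Sum.inr (Sum.inr (Sum.inr x)) : VH ⊕ T₁ ⊕ T₂ ⊕ U),
              Sum.inr (Sum.inr (Sum.inr y))) k)
          T ∧
        T.card = s.choose 2 + t + 3 := by
  intro x y hxy k
  classical
  set W₁ : Finset (VH ⊕ T₁ ⊕ T₂ ⊕ U) :=
    Finset.univ.map ⟨fun u : T₁ => Sum.inr (Sum.inl u), fun a b h => by simpa using h⟩ with hW₁
  set W₂ : Finset (VH ⊕ T₁ ⊕ T₂ ⊕ U) :=
    Finset.univ.map ⟨fun u : T₂ => Sum.inr (Sum.inr (Sum.inl u)), fun a b h => by simpa using h⟩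
    with hW₂
  have hW₁c : W₁.card = t := by rw [hW₁, Finset.card_map, Finset.card_univ, hT₁]
  have hW₂c : W₂.card = t := by rw [hW₂, Finset.card_map, Finset.card_univ, hT₂]
  have hW₁T : ∀ w ∈ W₁, InT₁ VH T₁ T₂ U w := by
    intro w hw
    simp only [hW₁, Finset.mem_map, Function.Embedding.coeFn_mk] at hw
    obtain ⟨u, _, rfl⟩ := hw; exact ⟨u, rfl⟩
  have hW₂T : ∀ w ∈ W₂, InT₂ VH T₁ T₂ U w := by
    intro w hw
    simp only [hW₂, Finset.mem_map, Function.Embedding.coeFn_mk] at hw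
    obtain ⟨u, _, rfl⟩ := hw; exact ⟨u, rfl⟩
  have key : ∃ (A : Finset VH) (W : Finset (VH ⊕ T₁ ⊕ T₂ ⊕ U)),
      IsRainbowClique HH χH A ∧ A.card = s.choose 2 + 1 ∧ W.card = t ∧
      ((∀ w ∈ W, InT₁ VH T₁ T₂ U w) ∨ (∀ w ∈ W, InT₂ VH T₁ T₂ U w)) ∧
      (∀ u ∈ A, ∀ v ∈ A, u ≠ v → χH s(u, v) ≠ k) ∧
      (∀ e ∈ (CliqueConstr VH T₁ T₂ U).edgeSet,
        (¬ ∃ u v : VH, HH.Adj u v ∧ e = s(Sum.inl u, Sum.inl v)) →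
        (∀ z ∈ e, z ∈ insert (Sum.inr (Sum.inr (Sum.inr x)) : VH ⊕ T₁ ⊕ T₂ ⊕ U)
            (insert (Sum.inr (Sum.inr (Sum.inr y)))
              (W ∪ A.map ⟨Sum.inl, Sum.inl_injective⟩))) → χ e ≠ k) := by
    by_cases hk : ∃ e₀ ∈ (CliqueConstr VH T₁ T₂ U).edgeSet,
        (¬ ∃ u v : VH, HH.Adj u v ∧ e₀ = s(Sum.inl u, Sum.inl v)) ∧ χ e₀ = k
    · obtain ⟨e₀, he₀, hnew₀, hk₀⟩ := hk
      obtain ⟨a, b, rfl⟩ : ∃ a b, e₀ = s(a, b) := by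
        obtain ⟨⟨a, b⟩, h⟩ := e₀.exists_rep; exact ⟨a, b, h.symm⟩
      -- any rainbow clique of HH avoids colour k (it is a new-edge colour)
      have hkAgen : ∀ (A : Finset VH), IsRainbowClique HH χH A →
          ∀ u ∈ A, ∀ v ∈ A, u ≠ v → χH s(u, v) ≠ k := by
        intro A hA u hu v hv huv h
        exact hnew' _ he₀ hnew₀ u v (hA.1 hu hv huv) (hk₀.trans h.symm)
      -- any internal new edge with colour k must equal s(a,b)
      have heq : ∀ e ∈ (CliqueConstr VH T₁ T₂ U).edgeSet,
          (¬ ∃ u v : VH, HH.Adj u v ∧ e = s(Sum.inl u, Sum.inl v)) → χ e = k →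
          e = s(a, b) := by
        intro e he hne hek
        by_contra h
        exact hnew e he _ he₀ hne hnew₀ h (hek.trans hk₀.symm)
      by_cases hv : ∃ v : VH, a = Sum.inl v ∨ b = Sum.inl v
      · obtain ⟨v, hv⟩ := hv
        obtain ⟨A, hA, hAc, hvA⟩ := havoidv v
        refine ⟨A, W₁, hA, hAc, hW₁c, Or.inl hW₁T, hkAgen A hA, ?_⟩
        intro e he hne hmemS hek
        have he' := heq e he hne hek
        subst he'
        have hvS : (Sum.inl v : VH ⊕ T₁ ⊕ T₂ ⊕ U) ∈
            insert (Sum.inr (Sum.inr (Sum.inr x)) : VH ⊕ T₁ ⊕ T₂ ⊕ U)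
              (insert (Sum.inr (Sum.inr (Sum.inr y)))
                (W₁ ∪ A.map ⟨Sum.inl, Sum.inl_injective⟩)) := by
          rcases hv with rfl | rfl
          · exact hmemS _ (Sym2.mem_mk_left _ _)
          · exact hmemS _ (Sym2.mem_mk_right _ _)
        simp only [hW₁, Finset.mem_insert, Finset.mem_union, Finset.mem_map,
          Function.Embedding.coeFn_mk] at hvS
        rcases hvS with h | h | ⟨u, _, h⟩ | ⟨v', hv', h⟩
        · exact absurd h (by simp)
        · exact absurd h (by simp)
        · exact absurd h (by simp)
        · rw [Sum.inl.injEq] at h; exact hvA (h ▸ hv')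
      · obtain ⟨A, hA, hAc, _⟩ := havoidc k
        by_cases ht : ∃ u : T₁, a = Sum.inr (Sum.inl u) ∨ b = Sum.inr (Sum.inl u)
        · obtain ⟨u, hu⟩ := ht
          refine ⟨A, W₂, hA, hAc, hW₂c, Or.inr hW₂T, hkAgen A hA, ?_⟩
          intro e he hne hmemS hek
          have he' := heq e he hne hek
          subst he'
          have huS : (Sum.inr (Sum.inl u) : VH ⊕ T₁ ⊕ T₂ ⊕ U) ∈
              insert (Sum.inr (Sum.inr (Sum.inr x)) : VH ⊕ T₁ ⊕ T₂ ⊕ U)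
                (insert (Sum.inr (Sum.inr (Sum.inr y)))
                  (W₂ ∪ A.map ⟨Sum.inl, Sum.inl_injective⟩)) := by
            rcases hu with rfl | rfl
            · exact hmemS _ (Sym2.mem_mk_left _ _)
            · exact hmemS _ (Sym2.mem_mk_right _ _)
          simp only [hW₂, Finset.mem_insert, Finset.mem_union, Finset.mem_map,
            Function.Embedding.coeFn_mk] at huS
          rcases huS with h | h | ⟨u', _, h⟩ | ⟨v', _, h⟩ <;> cases h
        · refine ⟨A, W₁, hA, hAc, hW₁c, Or.inl hW₁T, hkAgen A hA, ?_⟩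
          intro e he hne hmemS hek
          have he' := heq e he hne hek
          subst he'
          push_neg at hv ht
          have hclass : ∀ z, z ∈ s(a, b) →
              InU VH T₁ T₂ U z := by
            intro z hz
            have hzS := hmemS z hz
            simp only [hW₁, Finset.mem_insert, Finset.mem_union, Finset.mem_map,
              Function.Embedding.coeFn_mk] at hzS
            rw [Sym2.mem_iff] at hz
            rcases hzS with rfl | rfl | ⟨u', _, h⟩ | ⟨v', _, h⟩
            · exact ⟨x, rfl⟩
            · exact ⟨y, rfl⟩
            · rcases hz with rfl | rfl
              · exact absurd h.symm (ht u').1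
              · exact absurd h.symm (ht u').2
            · rcases hz with rfl | rfl
              · exact absurd h.symm (hv v').1
              · exact absurd h.symm (hv v').2
          have hadj := (CliqueConstr VH T₁ T₂ U).mem_edgeSet.1 he
          exact absurd ⟨hclass a (Sym2.mem_mk_left _ _), hclass b (Sym2.mem_mk_right _ _)⟩
            hadj.2.1
    · obtain ⟨A, hA, hAc, hkA⟩ := havoidc k
      refine ⟨A, W₁, hA, hAc, hW₁c, Or.inl hW₁T, hkA, ?_⟩
      intro e he hne _ hek
      exact hk ⟨e, he, hne, hek⟩
  obtain ⟨A, W, hA, hAc, hWc, hWT, hkA, hknew⟩ := key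
  obtain ⟨h1, h2⟩ := aux_clique HH χH χ hagree hnew hnew' x y hxy k A hA W hWT hkA hknew
  refine ⟨_, h1, ?_⟩
  rw [h2, hAc, hWc]
  omega
end
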